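/- Let ν ∈ (0,1), let E be a finite set of size M, and suppose each element e ∈ E independently carries a Geometric(ν) weight w_e (with support the positive integers). Let α = α(M) → 0. Then with probability 1 − o(1), every subset F ⊆ E with |F| ≤ α²M satisfies Σ_{e∈F} w_e ≤ α·M/ν. -/

import Mathlib

open MeasureTheory ProbabilityTheory
open scoped ENNReal

lemma geom_tail_tsum (ν : ℝ) (hν0 : 0 < ν) (hν1 : ν < 1) (t : ℕ) :
    ∑' j : ℕ, ν * (1 - ν) ^ (t + j) = (1 - ν) ^ t := by
  have hq0 : (0:ℝ) ≤ 1 - ν := by linarith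
  have hq1 : 1 - ν < 1 := by linarith
  have : (fun j : ℕ => ν * (1 - ν) ^ (t + j))
      = fun j : ℕ => (ν * (1 - ν) ^ t) * (1 - ν) ^ j := by
    funext j; rw [pow_add]; ring
  rw [this, tsum_mul_left, tsum_geometric_of_lt_one hq0 hq1]
  have : 1 - (1 - ν) = ν := by ring
  rw [this]
  field_simp

lemma geom_tail_summable (ν : ℝ) (hν0 : 0 < ν) (hν1 : ν < 1) (t : ℕ) :
    Summable (fun j : ℕ => ν * (1 - ν) ^ (t + j)) := by
  have hq0 : (0:ℝ) ≤ 1 - ν := by linarith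
  have hq1 : 1 - ν < 1 := by linarith
  have : (fun j : ℕ => ν * (1 - ν) ^ (t + j))
      = fun j : ℕ => (ν * (1 - ν) ^ t) * (1 - ν) ^ j := by
    funext j; rw [pow_add]; ring
  rw [this]
  exact (summable_geometric_of_lt_one hq0 hq1).mul_left _

variable {Ω : Type} [MeasurableSpace Ω]

lemma tail_prob (μ : Measure Ω) (ν : ℝ) (hν0 : 0 < ν) (hν1 : ν < 1)
    (w : Ω → ℕ) (hw : Measurable w)
    (hpmf : ∀ j : ℕ, 1 ≤ j → μ {ω | w ω = j} = ENNReal.ofReal (ν * (1 - ν) ^ (j - 1)))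
    (t : ℕ) :
    μ {ω | t < w ω} = ENNReal.ofReal ((1 - ν) ^ t) := by
  have hset : {ω | t < w ω} = ⋃ j : ℕ, {ω | w ω = t + 1 + j} := by
    ext ω
    simp only [Set.mem_setOf_eq, Set.mem_iUnion]
    constructor
    · intro h; exact ⟨w ω - (t + 1), by omega⟩
    · rintro ⟨j, hj⟩; omega
  have hdisj : Pairwise (Function.onFun Disjoint fun j : ℕ => {ω | w ω = t + 1 + j}) := by
    intro i j hij
    simp only [Function.onFun, Set.disjoint_left, Set.mem_setOf_eq]
    intro ω h1 h2
    omega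
  have hmeas : ∀ j : ℕ, MeasurableSet {ω | w ω = t + 1 + j} := fun j =>
    hw (measurableSet_singleton _)
  rw [hset, measure_iUnion hdisj hmeas]
  have h1 : ∀ j : ℕ, μ {ω | w ω = t + 1 + j} = ENNReal.ofReal (ν * (1 - ν) ^ (t + j)) := by
    intro j
    rw [hpmf (t + 1 + j) (by omega), show t + 1 + j - 1 = t + j from by omega]
  simp_rw [h1]
  rw [← ENNReal.ofReal_tsum_of_nonneg (fun j => mul_nonneg hν0.le (pow_nonneg (by linarith) _))
      (geom_tail_summable ν hν0 hν1 t), geom_tail_tsum ν hν0 hν1 t]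

lemma trunc_exp (μ : Measure Ω) (ν : ℝ) (hν0 : 0 < ν) (hν1 : ν < 1)
    (w : Ω → ℕ) (hw : Measurable w)
    (hpmf : ∀ j : ℕ, 1 ≤ j → μ {ω | w ω = j} = ENNReal.ofReal (ν * (1 - ν) ^ (j - 1)))
    (T : ℕ) :
    ∫⁻ ω, ((w ω - T : ℕ) : ℝ≥0∞) ∂μ = ENNReal.ofReal ((1 - ν) ^ T / ν) := by
  have key : ∀ a : ℕ, ((a - T : ℕ) : ℝ≥0∞)
      = ∑' s : ℕ, Set.indicator {b : ℕ | T + s < b} (fun _ => (1:ℝ≥0∞)) a := by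
    intro a
    rw [tsum_eq_sum (s := Finset.range (a - T))
      (by intro s hs; simp only [Finset.mem_range, not_lt] at hs
          simp only [Set.indicator_apply, Set.mem_setOf_eq, ite_eq_right_iff]
          intro h; omega)]
    have hone : ∀ s ∈ Finset.range (a - T),
        Set.indicator {b : ℕ | T + s < b} (fun _ => (1:ℝ≥0∞)) a = 1 := by
      intro s hs
      simp only [Finset.mem_range] at hs
      exact Set.indicator_of_mem (by simp only [Set.mem_setOf_eq]; omega) _
    rw [Finset.sum_congr rfl hone]
    simp
  calc ∫⁻ ω, ((w ω - T : ℕ) : ℝ≥0∞) ∂μ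
      = ∫⁻ ω, ∑' s : ℕ, Set.indicator {ω | T + s < w ω} (fun _ => (1:ℝ≥0∞)) ω ∂μ := by
        congr 1; funext ω; rw [key (w ω)]; rfl
    _ = ∑' s : ℕ, ∫⁻ ω, Set.indicator {ω | T + s < w ω} (fun _ => (1:ℝ≥0∞)) ω ∂μ :=
        lintegral_tsum (fun s =>
          ((measurable_const.indicator (hw measurableSet_Ioi)).aemeasurable))
    _ = ∑' s : ℕ, μ {ω | T + s < w ω} := by
        refine tsum_congr fun s => ?_
        exact lintegral_indicator_one (hw measurableSet_Ioi)
    _ = ∑' s : ℕ, ENNReal.ofReal ((1 - ν) ^ (T + s)) := by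
        refine tsum_congr fun s => tail_prob μ ν hν0 hν1 w hw hpmf (T + s)
    _ = ENNReal.ofReal ((1 - ν) ^ T / ν) := by
        have hsum : Summable (fun s : ℕ => (1 - ν) ^ (T + s)) := by
          have := (geom_tail_summable ν hν0 hν1 T).div_const ν
          refine this.congr fun s => ?_
          field_simp
        rw [← ENNReal.ofReal_tsum_of_nonneg (fun s => pow_nonneg (by linarith) _) hsum]
        congr 1
        have h := geom_tail_tsum ν hν0 hν1 T
        have : ∑' s : ℕ, (1 - ν) ^ (T + s) = (∑' s : ℕ, ν * (1 - ν) ^ (T + s)) / ν := by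
          rw [← tsum_div_const]
          refine tsum_congr fun s => ?_
          field_simp
        rw [this, h]

/-- Let `ν ∈ (0,1)`, let `E` be a set of size `M` whose elements independently carry
`Geometric(ν)` weights (supported on the positive integers), and let `α = α(M) → 0`.
Then with probability `1 − o(1)` (as `M → ∞`), every subset `F` with `|F| ≤ α²M`
satisfies `Σ_{e∈F} w_e ≤ α·M/ν`. -/
theorem stmt_19 (ν : ℝ) (hν : ν ∈ Set.Ioo (0:ℝ) 1)
    (α : ℕ → ℝ) (hαpos : ∀ M, 0 < α M)
    (hα : Filter.Tendsto α Filter.atTop (nhds 0)) :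
    ∀ ε : ℝ, 0 < ε → ∃ M₀ : ℕ, ∀ M : ℕ, M₀ ≤ M →
      ∀ (Ω : Type) [MeasurableSpace Ω] (μ : Measure Ω) [IsProbabilityMeasure μ]
        (w : Fin M → Ω → ℕ),
        (∀ e, Measurable (w e)) →
        iIndepFun w μ →
        (∀ e (j : ℕ), 1 ≤ j → μ {ω | w e ω = j} =
            ENNReal.ofReal (ν * (1 - ν) ^ (j - 1))) →
        (∀ e, μ {ω | w e ω = 0} = 0) →
        μ {ω | ¬ ∀ F : Finset (Fin M), (F.card : ℝ) ≤ (α M) ^ 2 * M →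
            ((∑ e ∈ F, w e ω : ℕ) : ℝ) ≤ α M * M / ν} ≤ ENNReal.ofReal ε := by
  obtain ⟨hν0, hν1⟩ := hν
  intro ε hε
  have hq0 : (0:ℝ) ≤ 1 - ν := by linarith
  have hq1 : 1 - ν < 1 := by linarith
  -- (n+1) * q^n → 0
  have hsum1 : Summable (fun n : ℕ => ((n:ℝ) + 1) * (1 - ν) ^ n) := by
    have h1 : Summable (fun n : ℕ => (n:ℝ) * (1 - ν) ^ n) := by
      have := summable_pow_mul_geometric_of_norm_lt_one (R := ℝ) 1
        (r := 1 - ν) (by rw [Real.norm_eq_abs, abs_of_nonneg hq0]; exact hq1)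
      simpa using this
    have h2 : Summable (fun n : ℕ => (1 - ν) ^ n) := summable_geometric_of_lt_one hq0 hq1
    have := h1.add h2
    refine this.congr fun n => ?_
    ring
  have htend := hsum1.tendsto_atTop_zero
  have hεν : (0:ℝ) < ε / (4 * ν) := by positivity
  obtain ⟨N, hN⟩ := Filter.eventually_atTop.1 (htend.eventually_lt_const hεν)
  have hδ : (0:ℝ) < 1 / (2 * ν * ((N:ℝ) + 1)) := by positivity
  obtain ⟨M₁, hM₁⟩ := Filter.eventually_atTop.1 (hα.eventually_lt_const hδ)
  refine ⟨max M₁ 1, fun M hM Ω _ μ _ w hwm hind hpmf h0 => ?_⟩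
  have hM1 : 1 ≤ M := le_trans (le_max_right _ _) hM
  have haδ : α M < 1 / (2 * ν * ((N:ℝ) + 1)) := hM₁ M (le_trans (le_max_left _ _) hM)
  set a : ℝ := α M with ha'
  have ha : 0 < a := hαpos M
  have haM : (0:ℝ) < M := by exact_mod_cast hM1
  set T : ℕ := ⌊1 / (2 * a * ν)⌋₊ with hT
  have hx0 : (0:ℝ) ≤ 1 / (2 * a * ν) := by positivity
  have hTle : (T:ℝ) ≤ 1 / (2 * a * ν) := Nat.floor_le hx0
  have hTgt : 1 / (2 * a * ν) < (T:ℝ) + 1 := Nat.lt_floor_add_one _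
  have hNT : N ≤ T := by
    apply Nat.le_floor
    have h1 : a * (2 * ν * ((N:ℝ) + 1)) < 1 := by
      rw [lt_div_iff₀ (by positivity)] at haδ
      linarith
    rw [le_div_iff₀ (by positivity)]
    nlinarith
  set B : ℝ := a * M / (2 * ν) with hB
  have hBpos : 0 < B := by positivity
  set X : Ω → ℝ≥0∞ := fun ω => ((∑ e : Fin M, (w e ω - T) : ℕ) : ℝ≥0∞) with hX
  have hmeas_e : ∀ e : Fin M, Measurable (fun ω => ((w e ω - T : ℕ) : ℝ≥0∞)) := fun e =>
    measurable_from_top.comp ((hwm e).sub measurable_const)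
  have hXmeas : Measurable X := by
    have : X = fun ω => ∑ e : Fin M, ((w e ω - T : ℕ) : ℝ≥0∞) := by
      funext ω; rw [hX]; push_cast; rfl
    rw [this]
    exact Finset.measurable_sum _ (fun e _ => hmeas_e e)
  have hsub : {ω | ¬ ∀ F : Finset (Fin M), (F.card : ℝ) ≤ a ^ 2 * M →
        ((∑ e ∈ F, w e ω : ℕ) : ℝ) ≤ a * M / ν}
      ⊆ {ω | ENNReal.ofReal B ≤ X ω} := by
    intro ω hω
    simp only [Set.mem_setOf_eq] at hω ⊢
    push_neg at hω
    obtain ⟨F, hFcard, hFsum⟩ := hω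
    set S : ℕ := ∑ e : Fin M, (w e ω - T) with hS
    have hnat : (∑ e ∈ F, w e ω) ≤ F.card * T + S := by
      calc ∑ e ∈ F, w e ω ≤ ∑ e ∈ F, (T + (w e ω - T)) :=
            Finset.sum_le_sum (fun e _ => by omega)
        _ = F.card * T + ∑ e ∈ F, (w e ω - T) := by
            rw [Finset.sum_add_distrib, Finset.sum_const, smul_eq_mul]
        _ ≤ F.card * T + S :=
            Nat.add_le_add_left (Finset.sum_le_sum_of_subset F.subset_univ) _
    have hreal : ((∑ e ∈ F, w e ω : ℕ) : ℝ) ≤ (F.card : ℝ) * T + (S : ℝ) := by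
      exact_mod_cast hnat
    have h1 : (F.card : ℝ) * T ≤ B := by
      calc (F.card : ℝ) * T ≤ (a ^ 2 * M) * T := by
            exact mul_le_mul_of_nonneg_right hFcard (Nat.cast_nonneg _)
        _ ≤ (a ^ 2 * M) * (1 / (2 * a * ν)) :=
            mul_le_mul_of_nonneg_left hTle (by positivity)
        _ = B := by rw [hB]; field_simp
    have h2 : a * M / ν = 2 * B := by rw [hB]; field_simp
    have hBS : B < (S : ℝ) := by
      rw [h2] at hFsum
      linarith
    have hle : ENNReal.ofReal B ≤ ENNReal.ofReal (S : ℝ) := ENNReal.ofReal_le_ofReal hBS.le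
    rwa [ENNReal.ofReal_natCast] at hle
  have hint : ∫⁻ ω, X ω ∂μ = (M : ℝ≥0∞) * ENNReal.ofReal ((1 - ν) ^ T / ν) := by
    have hXeq : ∀ ω, X ω = ∑ e : Fin M, ((w e ω - T : ℕ) : ℝ≥0∞) := fun ω => by
      rw [hX]; push_cast; rfl
    simp_rw [hXeq]
    rw [lintegral_finset_sum _ (fun e _ => hmeas_e e)]
    have he : ∀ e : Fin M, ∫⁻ ω, ((w e ω - T : ℕ) : ℝ≥0∞) ∂μ
        = ENNReal.ofReal ((1 - ν) ^ T / ν) := fun e =>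
      trunc_exp μ ν hν0 hν1 (w e) (hwm e) (hpmf e) T
    rw [Finset.sum_congr rfl (fun e _ => he e), Finset.sum_const, Finset.card_univ,
      Fintype.card_fin, nsmul_eq_mul]
  calc μ {ω | ¬ ∀ F : Finset (Fin M), (F.card : ℝ) ≤ a ^ 2 * M →
        ((∑ e ∈ F, w e ω : ℕ) : ℝ) ≤ a * M / ν}
      ≤ μ {ω | ENNReal.ofReal B ≤ X ω} := measure_mono hsub
    _ ≤ (∫⁻ ω, X ω ∂μ) / ENNReal.ofReal B :=
        meas_ge_le_lintegral_div hXmeas.aemeasurable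
          (ENNReal.ofReal_pos.mpr hBpos).ne' ENNReal.ofReal_ne_top
    _ = ENNReal.ofReal ((M * ((1 - ν) ^ T / ν)) / B) := by
        rw [hint, ← ENNReal.ofReal_natCast M,
          ← ENNReal.ofReal_mul (Nat.cast_nonneg M), ENNReal.ofReal_div_of_pos hBpos]
    _ ≤ ENNReal.ofReal ε := by
        apply ENNReal.ofReal_le_ofReal
        have hqT : (0:ℝ) ≤ (1 - ν) ^ T := pow_nonneg hq0 _
        have heq : (M * ((1 - ν) ^ T / ν)) / B = 2 * (1 - ν) ^ T / a := by
          rw [hB]; field_simp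
        rw [heq]
        have h1a : 1 / a < 2 * ν * ((T:ℝ) + 1) := by
          rw [div_lt_iff₀ ha]
          rw [div_lt_iff₀ (by positivity)] at hTgt
          nlinarith
        have hNbound := hN T hNT
        rw [lt_div_iff₀ (by positivity)] at hNbound
        calc 2 * (1 - ν) ^ T / a = 2 * (1 - ν) ^ T * (1 / a) := by ring
          _ ≤ 2 * (1 - ν) ^ T * (2 * ν * ((T:ℝ) + 1)) :=
              mul_le_mul_of_nonneg_left h1a.le (by positivity)
          _ ≤ ε := by nlinarith
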